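/- Let p > 3 be a prime, m a positive integer, and n = 2m. For the power mapping F(x) = x^{p^m+2} over F_{p^n}, one has δ(b) ∈ {0, 1, 2, 4} for every b ∈ F_{p^n}. -/
import Mathlib

open Polynomial

theorem even_card_of_invol' {α : Type*} [DecidableEq α] (s : Finset α) (σ : α → α)
    (h : ∀ x ∈ s, σ x ∈ s ∧ σ (σ x) = x ∧ σ x ≠ x) : Even s.card := by
  induction s using Finset.strongInduction with
  | _ s ih =>
    rcases s.eq_empty_or_nonempty with rfl | ⟨a, ha⟩
    · simp
    · obtain ⟨hσa, hσσa, hne⟩ := h a ha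
      have hsub : ({a, σ a} : Finset α) ⊆ s := by
        intro z hz; simp at hz; rcases hz with rfl | rfl <;> assumption
      have hcard2 : ({a, σ a} : Finset α).card = 2 := by
        rw [Finset.card_insert_of_notMem (by simpa using (Ne.symm hne)), Finset.card_singleton]
      have hssub : s \ {a, σ a} ⊂ s := Finset.sdiff_ssubset hsub ⟨a, by simp⟩
      have hev := ih _ hssub (fun x hx => by
        rw [Finset.mem_sdiff] at hx
        obtain ⟨hxs, hxn⟩ := hx
        obtain ⟨h1, h2, h3⟩ := h x hxs
        refine ⟨?_, h2, h3⟩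
        rw [Finset.mem_sdiff]
        refine ⟨h1, ?_⟩
        simp only [Finset.mem_insert, Finset.mem_singleton] at hxn ⊢
        push_neg at hxn ⊢
        constructor
        · intro hxa
          apply hxn.2
          rw [← h2, hxa]
        · intro hxy
          apply hxn.1
          have := congrArg σ hxy
          rwa [h2, hσσa] at this)
      have hc : s.card = (s \ {a, σ a}).card + 2 := by
        rw [Finset.card_sdiff_of_subset hsub, hcard2]
        have := Finset.card_le_card hsub
        omega
      rw [hc]
      exact hev.add (by decide)

/-- The number of `x` in the field `F` with `(x+1)^d - x^d = b`. -/
def deltaF (F : Type*) [Field F] [Fintype F] [DecidableEq F] (d : ℕ) (b : F) : ℕ :=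
  (Finset.univ.filter (fun x : F => (x + 1) ^ d - x ^ d = b)).card

/-- The number of `b` in the field `F` with `deltaF F d b = i`. -/
def omegaF (F : Type*) [Field F] [Fintype F] [DecidableEq F] (d i : ℕ) : ℕ :=
  (Finset.univ.filter (fun b : F => deltaF F d b = i)).card



/-- For `x^(p^m+2)` over `F_{p^n}` with `p > 3` prime and `n = 2m`:
`δ(b) ∈ {0, 1, 2, 4}` for every `b`. -/
theorem stmt8 (p : ℕ) (hp : p.Prime) (hp3 : 3 < p) (m : ℕ) (hm : 0 < m) (n : ℕ)
    (hn : n = 2 * m)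
    (F : Type*) [Field F] [Fintype F] [DecidableEq F]
    (hF : Fintype.card F = p ^ n) :
    ∀ b : F, deltaF F (p ^ m + 2) b ∈ ({0, 1, 2, 4} : Set ℕ) := by
  intro b
  haveI : Fact p.Prime := ⟨hp⟩
  -- characteristic
  haveI hchar : CharP F p := by
    obtain ⟨n', hk⟩ := FiniteField.card F (ringChar F)
    have hr : (ringChar F).Prime := hk.1
    have : p ^ n = ringChar F ^ (n' : ℕ) := by rw [← hF, hk.2]
    have hd : p ∣ ringChar F := by
      have : p ∣ ringChar F ^ (n' : ℕ) := this ▸ dvd_pow_self p (by omega : n ≠ 0)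
      exact hp.dvd_of_dvd_pow this
    have : p = ringChar F := ((Nat.prime_dvd_prime_iff_eq hp hr).mp hd)
    rw [this]; infer_instance
  haveI : ExpChar F p := ExpChar.prime hp
  have hp2 : p ≠ 2 := by omega
  have h2 : (2:F) ≠ 0 := by
    have : ((2:ℕ):F) ≠ 0 := by
      rw [Ne, CharP.cast_eq_zero_iff F p]
      intro hd; have := Nat.le_of_dvd (by norm_num) hd; omega
    simpa using this
  have h3 : (3:F) ≠ 0 := by
    have : ((3:ℕ):F) ≠ 0 := by
      rw [Ne, CharP.cast_eq_zero_iff F p]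
      intro hd; have := Nat.le_of_dvd (by norm_num) hd; omega
    simpa using this
  have h4 : (4:F) ≠ 0 := by
    have : (4:F) = 2*2 := by norm_num
    rw [this]; exact mul_ne_zero h2 h2
  set φ := iterateFrobenius F p m with hφdef
  have hφ : ∀ z : F, φ z = z ^ p ^ m := fun z => by rw [hφdef, iterateFrobenius_def]
  have hqq : ∀ z : F, (z ^ p ^ m) ^ p ^ m = z := by
    intro z
    rw [← pow_mul, ← pow_add, ← two_mul, ← hn]
    have hzc := FiniteField.pow_card z
    rwa [hF] at hzc
  have h2q : (2:F) ^ p ^ m = 2 := by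
    rw [← hφ]; exact map_ofNat φ 2
  have h4q : (4:F) ^ p ^ m = 4 := by
    rw [← hφ]; exact map_ofNat φ 4
  have hoddq : Odd (p ^ m) := (hp.odd_of_ne_two hp2).pow
  have hodd : Odd (p ^ m + 2) := hoddq.add_even (by decide)
  -- the key reduction to the bivariate system
  have key : ∀ x : F, (x+1)^(p^m+2) - x^(p^m+2) = b →
      (x^2 + 2*x*(x^(p^m)) + x^(p^m) + 2*x + 1 = b ∧
       (x^(p^m))^2 + 2*x*(x^(p^m)) + x + 2*(x^(p^m)) + 1 = b^(p^m)) := by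
    intro x hx
    have e1 : x^2 + 2*x*(x^(p^m)) + x^(p^m) + 2*x + 1 = b := by
      rw [← hx, pow_add, pow_add, add_pow_char_pow]
      ring
    refine ⟨e1, ?_⟩
    have e2 := congrArg φ e1
    simp only [map_add, map_mul, map_one, map_ofNat, map_pow] at e2
    simp only [hφ, hqq] at e2
    linear_combination e2
  -- the special value
  have h2i : (2:F) * 2⁻¹ = 1 := mul_inv_cancel₀ h2
  have h4i : (4:F) * 4⁻¹ = 1 := mul_inv_cancel₀ h4
  have hval : ((-2⁻¹:F)+1)^(p^m+2) - (-2⁻¹:F)^(p^m+2) = 4⁻¹ := by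
    have hh : ((-2⁻¹:F)+1) = 2⁻¹ := by linear_combination -h2i
    rw [hh, hodd.neg_pow, pow_add, inv_pow, h2q]
    refine (inv_eq_of_mul_eq_one_right ?_).symm
    linear_combination (4*2⁻¹^2 + 2*2⁻¹ + 1) * h2i
  by_cases hb : b = (4⁻¹ : F)
  · -- the exceptional case : exactly one solution
    subst hb
    have hset : (Finset.univ.filter
        (fun x : F => (x + 1) ^ (p^m+2) - x ^ (p^m+2) = (4⁻¹:F))) = {(-2⁻¹ : F)} := by
      ext x
      simp only [Finset.mem_filter, Finset.mem_univ, true_and, Finset.mem_singleton]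
      constructor
      · intro hx
        obtain ⟨e1, e2⟩ := key x hx
        rw [inv_pow, h4q] at e2
        have hdiff : (x - x^(p^m)) * (x + x^(p^m) + 1) = 0 := by linear_combination e1 - e2
        have hsq : (2*x+1)^2 = 0 := by
          rcases mul_eq_zero.mp hdiff with hc | hc
          · have hy : x^(p^m) = x := by linear_combination -hc
            rw [hy] at e1
            have h30 : (3:F) * (2*x+1)^2 = 0 := by linear_combination 4*e1 + h4i
            rcases mul_eq_zero.mp h30 with h' | h'
            · exact absurd h' h3
            · exact h'
          · linear_combination (-4:F)*e1 + (8*x+4)*hc - h4i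
        have hlin : 2*x+1 = 0 := by
          have := sq_eq_zero_iff.mp hsq
          exact this
        linear_combination 2⁻¹ * hlin - x * h2i
      · rintro rfl
        exact hval
    show deltaF F (p^m+2) (4⁻¹:F) ∈ _
    rw [deltaF, hset, Finset.card_singleton]
    right; left; rfl
  · -- generic case : number of solutions is even and at most 4
    set s : Finset F :=
      Finset.univ.filter (fun x : F => (x + 1) ^ (p^m+2) - x ^ (p^m+2) = b) with hs
    have hmem : ∀ x : F, x ∈ s ↔ (x + 1) ^ (p^m+2) - x ^ (p^m+2) = b := by
      intro x; simp [hs]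
    -- evenness via the fixed-point-free involution x ↦ -1 - x
    have heven : Even s.card := by
      apply even_card_of_invol' s (fun x => -1 - x)
      intro x hx
      rw [hmem] at hx
      refine ⟨?_, by ring, ?_⟩
      · rw [hmem]
        have h1 : ((-1 - x : F) + 1) = -x := by ring
        have h2' : ((-1 - x : F)) = -(x+1) := by ring
        rw [h1, h2', hodd.neg_pow, hodd.neg_pow]
        linear_combination hx
      · intro heq
        have hx2 : x = -2⁻¹ := by linear_combination (-2⁻¹:F) * heq - x * h2i
        rw [hx2, hval] at hx
        exact hb hx.symm
    -- bound via a quartic polynomial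
    have hle : s.card ≤ 4 := by
      set β : F := 1 - b with hβ
      set γ : F := 1 - b^(p^m) with hγ
      set P : F[X] := C (-3) * X^4 + C (-6) * X^3 + C (-6 - 2*β + 4*γ) * X^2
          + C (-2*β + 4*γ - 3) * X + C (β^2 - 2*β + γ) with hP
      have hdeg : P.natDegree ≤ 4 := by
        rw [hP]; compute_degree
      have hC4 : P.coeff 4 = -3 := by
        rw [hP]
        simp only [coeff_add, coeff_C_mul, coeff_X_pow, coeff_X, coeff_C]
        norm_num
      have hPne : P ≠ 0 := by
        intro h
        rw [h, Polynomial.coeff_zero] at hC4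
        exact h3 (by linear_combination hC4)
      have hsub : s ⊆ P.roots.toFinset := by
        intro x hx
        rw [hmem] at hx
        obtain ⟨e1, e2⟩ := key x hx
        rw [Multiset.mem_toFinset, mem_roots hPne]
        show P.eval x = 0
        rw [hP]
        simp only [eval_add, eval_mul, eval_pow, eval_C, eval_X, hβ, hγ]
        linear_combination (x^2 + 2*x + 1 - b - (x^(p^m))*(2*x+1) - 2*(2*x+1)*(x+1)) * e1
          + (2*x+1)^2 * e2
      calc s.card ≤ P.roots.toFinset.card := Finset.card_le_card hsub
        _ ≤ Multiset.card P.roots := Multiset.toFinset_card_le _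
        _ ≤ P.natDegree := P.card_roots'
        _ ≤ 4 := hdeg
    show deltaF F (p^m+2) b ∈ _
    rw [deltaF, ← hs]
    obtain ⟨k, hk⟩ := heven
    simp only [Set.mem_insert_iff, Set.mem_singleton_iff]
    omega
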